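/- Fix an integer a ≥ 0 and define S_a(λ) := ∑_{δ|λ, δ∈P₌} ℓ(δ)^a, the sum over partition divisors of λ lying in P₌. Then ⟨S_a⟩_q = ∑_{n≥1} σ_a(n) qⁿ, where σ_a(n) = ∑_{d|n} d^a is the classical divisor-power sum; equivalently, for every integer n ≥ 0, ∑_{λ⊢n} S_a(λ) = ∑_{k=1}^{n} σ_a(k) · p(n−k). -/

import Mathlib

/-- The set of partition divisors (sub-partitions) of `l`. -/
def pdivisors (l : Multiset ℕ+) : Finset (Multiset ℕ+) := l.powerset.toFinset

/-- Partition-theoretic Möbius function. -/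
def pmu (l : Multiset ℕ+) : ℂ := if l.Nodup then (-1 : ℂ) ^ (Multiset.card l) else 0

/-- The "integer" of a partition: the product of its parts. -/
def nInt (l : Multiset ℕ+) : ℕ := (l.map (fun a => (a : ℕ))).prod

/-- Partition-theoretic phi function. -/
noncomputable def pphi (l : Multiset ℕ+) : ℂ :=
  (nInt l : ℂ) * ∏ a ∈ l.toFinset, (1 - (a : ℂ)⁻¹)

/-- Convert a `Nat.Partition n` to a multiset of positive integers. -/
def toPtn {n : ℕ} (p : n.Partition) : Multiset ℕ+ :=
  p.parts.pmap (fun x hx => ⟨x, hx⟩) (fun _ hx => p.parts_pos hx)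

/-- The partition function `p(n)`. -/
def partcount (n : ℕ) : ℕ := Fintype.card (Nat.Partition n)

/-- A partition lies in `P₌` iff it is nonempty with all parts equal. -/
def isPeq (l : Multiset ℕ+) : Prop :=
  ∃ (a : ℕ+) (k : ℕ), 0 < k ∧ l = Multiset.replicate k a

open scoped Classical

lemma toPtn_map_coe {n : ℕ} (p : n.Partition) :
    (toPtn p).map (fun a : ℕ+ => (a : ℕ)) = p.parts := by
  simp only [toPtn, Multiset.map_pmap]
  exact (Multiset.map_pmap _ _ _ _).trans ((Multiset.pmap_eq_map _ _ _ _).trans (Multiset.map_id _))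

lemma msum_mono {s t : Multiset ℕ} (h : s ≤ t) : s.sum ≤ t.sum := by
  obtain ⟨u, rfl⟩ := Multiset.le_iff_exists_add.1 h
  simp

lemma mem_pdivisors {δ l : Multiset ℕ+} : δ ∈ pdivisors l ↔ δ ≤ l := by
  simp [pdivisors, Multiset.mem_powerset]

lemma le_toPtn_iff {n : ℕ} (p : n.Partition) (δ : Multiset ℕ+) :
    δ ≤ toPtn p ↔ δ.map (fun a : ℕ+ => (a : ℕ)) ≤ p.parts := by
  rw [← toPtn_map_coe p]
  exact (Multiset.map_le_map_iff (fun a b h => PNat.coe_injective h)).symm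

/-- Bijection between partitions of `n - d*m` and partitions of `n` containing
`replicate d m`. -/
noncomputable def peqEquiv (n d m : ℕ) (hm : 0 < m) (hdm : d * m ≤ n) :
    Nat.Partition (n - d * m) ≃ {p : n.Partition // Multiset.replicate d m ≤ p.parts} where
  toFun μ := ⟨⟨μ.parts + Multiset.replicate d m, by
      intro x hx
      rcases Multiset.mem_add.1 hx with h | h
      · exact μ.parts_pos h
      · rw [Multiset.eq_of_mem_replicate h]; exact hm, by
      simp [μ.parts_sum, Multiset.sum_replicate, smul_eq_mul, Nat.sub_add_cancel hdm]⟩,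
    Multiset.le_add_left _ _⟩
  invFun x := ⟨x.1.parts - Multiset.replicate d m, by
      intro y hy
      exact x.1.parts_pos (Multiset.mem_of_le (tsub_le_self) hy), by
      have h1 : (x.1.parts - Multiset.replicate d m) + Multiset.replicate d m = x.1.parts :=
        tsub_add_cancel_of_le x.2
      have h2 := congrArg Multiset.sum h1
      rw [Multiset.sum_add, Multiset.sum_replicate, smul_eq_mul, x.1.parts_sum] at h2
      omega⟩
  left_inv μ := by
    ext1
    simp
  right_inv x := by
    ext1
    exact Nat.Partition.ext (tsub_add_cancel_of_le x.2)

lemma count_lemma (n d m : ℕ) (hm : 0 < m) (hdm : d * m ≤ n) :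
    (Finset.univ.filter (fun p : n.Partition => Multiset.replicate d m ≤ p.parts)).card
      = partcount (n - d * m) := by
  rw [← Fintype.card_subtype]
  rw [← Fintype.card_congr (peqEquiv n d m hm hdm)]
  rfl

lemma per_p (a n : ℕ) (p : n.Partition) :
    ∑ δ ∈ (pdivisors (toPtn p)).filter isPeq, (Multiset.card δ) ^ a
      = ∑ x ∈ (Finset.Icc 1 n ×ˢ Finset.Icc 1 n).filter
          (fun x : ℕ × ℕ => Multiset.replicate x.1 x.2 ≤ p.parts), x.1 ^ a := by
  refine Finset.sum_bij'
    (fun δ _ => (Multiset.card δ, (δ.map (fun a : ℕ+ => (a : ℕ))).sum / Multiset.card δ))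
    (fun x hx => Multiset.replicate x.1
      (⟨x.2, by
        have := (Finset.mem_filter.1 hx).1
        have := (Finset.mem_product.1 this).2
        have := (Finset.mem_Icc.1 this).1
        omega⟩ : ℕ+))
    ?_ ?_ ?_ ?_ ?_
  · -- hi
    intro δ hδ
    obtain ⟨hmem, b, k, hk, rfl⟩ := Finset.mem_filter.1 hδ
    have hle : (Multiset.replicate k b).map (fun a : ℕ+ => (a : ℕ)) ≤ p.parts :=
      (le_toPtn_iff p _).1 (mem_pdivisors.1 hmem)
    rw [Multiset.map_replicate] at hle
    have hsum : k * (b : ℕ) ≤ n := by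
      have := msum_mono hle
      rwa [Multiset.sum_replicate, smul_eq_mul, p.parts_sum] at this
    have hb : 1 ≤ (b : ℕ) := b.one_le
    simp only [Multiset.card_replicate, Multiset.map_replicate, Multiset.sum_replicate,
      smul_eq_mul, Nat.mul_div_cancel_left _ hk]
    refine Finset.mem_filter.2 ⟨Finset.mem_product.2 ⟨?_, ?_⟩, hle⟩
    · exact Finset.mem_Icc.2 ⟨hk, by nlinarith⟩
    · exact Finset.mem_Icc.2 ⟨hb, by nlinarith⟩
  · -- hj
    intro x hx
    obtain ⟨hmem, hle⟩ := Finset.mem_filter.1 hx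
    obtain ⟨h1, h2⟩ := Finset.mem_product.1 hmem
    have hx1 : 1 ≤ x.1 := (Finset.mem_Icc.1 h1).1
    refine Finset.mem_filter.2 ⟨mem_pdivisors.2 ((le_toPtn_iff p _).2 ?_), ?_⟩
    · exact (Multiset.map_replicate _ _ _).le.trans hle
    · exact ⟨_, x.1, hx1, rfl⟩
  · -- left inv
    intro δ hδ
    obtain ⟨hmem, b, k, hk, rfl⟩ := Finset.mem_filter.1 hδ
    simp only [Multiset.card_replicate, Multiset.map_replicate, Multiset.sum_replicate,
      smul_eq_mul, Nat.mul_div_cancel_left _ hk]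
    congr 1
  · -- right inv
    intro x hx
    obtain ⟨hmem, _⟩ := Finset.mem_filter.1 hx
    obtain ⟨h1, _⟩ := Finset.mem_product.1 hmem
    have hx1 : 1 ≤ x.1 := (Finset.mem_Icc.1 h1).1
    exact Prod.ext (Multiset.card_replicate _ _)
      ((congrArg₂ (· / ·) (congrArg Multiset.sum (Multiset.map_replicate _ _ _))
        (Multiset.card_replicate _ _)).trans
        (by rw [Multiset.sum_replicate, smul_eq_mul, Nat.mul_div_cancel_left _ hx1]; rfl))
  · intro δ _
    rfl

/-- With `S_a(λ) := ∑_{δ|λ, δ∈P₌} ℓ(δ)^a`, we have `⟨S_a⟩_q = ∑_{n≥1} σ_a(n) qⁿ`: in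
graded form, for every `n ≥ 0`, `∑_{λ⊢n} S_a(λ) = ∑_{k=1}^{n} σ_a(k)·p(n−k)`. -/
theorem qbracket_S_a (a : ℕ) (n : ℕ) :
    (∑ p : n.Partition, ∑ δ ∈ pdivisors (toPtn p),
        if isPeq δ then (Multiset.card δ) ^ a else 0)
      = ∑ k ∈ Finset.Icc 1 n, (∑ d ∈ k.divisors, d ^ a) * partcount (n - k) := by
  have step1 : (∑ p : n.Partition, ∑ δ ∈ pdivisors (toPtn p),
        if isPeq δ then (Multiset.card δ) ^ a else 0)
      = ∑ p : n.Partition, ∑ x ∈ (Finset.Icc 1 n ×ˢ Finset.Icc 1 n),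
          if Multiset.replicate x.1 x.2 ≤ p.parts then x.1 ^ a else 0 := by
    refine Finset.sum_congr rfl fun p _ => ?_
    rw [← Finset.sum_filter, ← Finset.sum_filter]
    exact per_p a n p
  rw [step1, Finset.sum_comm]
  have step2 : ∀ x ∈ (Finset.Icc 1 n ×ˢ Finset.Icc 1 n),
      (∑ p : n.Partition, if Multiset.replicate x.1 x.2 ≤ p.parts then x.1 ^ a else 0)
        = if x.1 * x.2 ≤ n then partcount (n - x.1 * x.2) * x.1 ^ a else 0 := by
    intro x hx
    obtain ⟨h1, h2⟩ := Finset.mem_product.1 hx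
    have hx1 : 1 ≤ x.1 := (Finset.mem_Icc.1 h1).1
    have hx2 : 1 ≤ x.2 := (Finset.mem_Icc.1 h2).1
    rw [← Finset.sum_filter, Finset.sum_const, smul_eq_mul]
    by_cases hle : x.1 * x.2 ≤ n
    · rw [if_pos hle, count_lemma n x.1 x.2 hx2 hle]
    · rw [if_neg hle]
      convert zero_mul (x.1 ^ a)
      rw [Finset.card_eq_zero, Finset.filter_eq_empty_iff]
      intro p _ hp
      have := msum_mono hp
      rw [Multiset.sum_replicate, smul_eq_mul, p.parts_sum] at this
      exact hle this
  rw [Finset.sum_congr rfl step2]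
  rw [← Finset.sum_filter]
  have hmaps : ∀ x ∈ (Finset.Icc 1 n ×ˢ Finset.Icc 1 n).filter
      (fun x : ℕ × ℕ => x.1 * x.2 ≤ n), x.1 * x.2 ∈ Finset.Icc 1 n := by
    intro x hx
    obtain ⟨hmem, hle⟩ := Finset.mem_filter.1 hx
    obtain ⟨h1, h2⟩ := Finset.mem_product.1 hmem
    have hx1 : 1 ≤ x.1 := (Finset.mem_Icc.1 h1).1
    have hx2 : 1 ≤ x.2 := (Finset.mem_Icc.1 h2).1
    exact Finset.mem_Icc.2 ⟨by nlinarith, hle⟩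
  rw [← Finset.sum_fiberwise_of_maps_to hmaps
    (fun x : ℕ × ℕ => partcount (n - x.1 * x.2) * x.1 ^ a)]
  refine Finset.sum_congr rfl fun k hk => ?_
  have hk1 : 1 ≤ k := (Finset.mem_Icc.1 hk).1
  have hkn : k ≤ n := (Finset.mem_Icc.1 hk).2
  have hfib : ((Finset.Icc 1 n ×ˢ Finset.Icc 1 n).filter
      (fun x : ℕ × ℕ => x.1 * x.2 ≤ n)).filter (fun x => x.1 * x.2 = k)
        = k.divisorsAntidiagonal := by
    ext x
    simp only [Finset.mem_filter, Finset.mem_product, Finset.mem_Icc,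
      Nat.mem_divisorsAntidiagonal]
    constructor
    · rintro ⟨⟨⟨_, _⟩, _⟩, hkk⟩
      exact ⟨hkk, by omega⟩
    · rintro ⟨hkk, -⟩
      have hx1 : 1 ≤ x.1 := by
        rcases Nat.eq_zero_or_pos x.1 with h | h
        · rw [h] at hkk; simp at hkk; omega
        · exact h
      have hx2 : 1 ≤ x.2 := by
        rcases Nat.eq_zero_or_pos x.2 with h | h
        · rw [h] at hkk; simp at hkk; omega
        · exact h
      refine ⟨⟨⟨⟨hx1, ?_⟩, ⟨hx2, ?_⟩⟩, by omega⟩, hkk⟩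
      · calc x.1 ≤ x.1 * x.2 := Nat.le_mul_of_pos_right _ hx2
          _ ≤ n := by omega
      · calc x.2 ≤ x.1 * x.2 := Nat.le_mul_of_pos_left _ hx1
          _ ≤ n := by omega
  rw [hfib]
  rw [Finset.sum_mul]
  rw [← Nat.sum_divisorsAntidiagonal (fun d m => d ^ a * partcount (n - k))]
  refine Finset.sum_congr rfl fun x hx => ?_
  have := (Nat.mem_divisorsAntidiagonal.1 hx).1
  rw [this, mul_comm]
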